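/- arXiv:1203.6610 — 4 statements merged into one kernel-verified Lean document; each statement's English description precedes it below -/
import Mathlib

section
/- In the multi-seller setting, for every seller profile τ and every buyer assignment σ, SW(τ,σ) ≤ (c_1 + min(|S|,|B|)·p^2)/(|S|·|G|), where c_1 := p^1 − p^2 is the number of goods with unit demand. -/
open Finset

variable {B G S : Type*} [Fintype B] [Fintype G] [Fintype S]
variable [DecidableEq B] [DecidableEq G] [DecidableEq S]

/-- `v_b(Ḡ)`: buyer `b`'s total valuation of the variants in `Ḡ`. -/
def vsum (v : B → G → ℕ) (b : B) (Gb : Finset G) : ℕ := ∑ g ∈ Gb, v b g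

/-- `V̄1(B̄,Ḡ)`: the largest value among `(v_b(Ḡ))_{b∈B̄}` (`0` if `B̄ = ∅`). -/
def V1 (v : B → G → ℕ) (Bb : Finset B) (Gb : Finset G) : ℕ :=
  Bb.sup (fun b => vsum v b Gb)

/-- `V̄2(B̄,Ḡ)`: the second-largest value, counted with multiplicity
(`0` if `|B̄| ≤ 1`).  It equals the minimum, over removal of one buyer,
of the maximum over the remaining buyers. -/
def V2 (v : B → G → ℕ) (Bb : Finset B) (Gb : Finset G) : ℕ :=
  if h : Bb.Nonempty then Bb.inf' h (fun b => V1 v (Bb.erase b) Gb) else 0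

/-- The set of buyers choosing seller `s` under the assignment `σ`. -/
def buyersOf (σ : B → S) (s : S) : Finset B := univ.filter (fun b => σ b = s)

/-- Buyer `b`'s utility in the multi-seller game. -/
def ubuyer (v : B → G → ℕ) (τ : S → Finpartition (univ : Finset G)) (σ : B → S) (b : B) : ℚ :=
  (Fintype.card G : ℚ)⁻¹ *
    ∑ Gb ∈ (τ (σ b)).parts, max ((vsum v b Gb : ℚ) - (V2 v (buyersOf σ (σ b)) Gb : ℚ)) 0

/-- Seller `s`'s utility in the multi-seller game. -/
def useller (v : B → G → ℕ) (τ : S → Finpartition (univ : Finset G)) (σ : B → S) (s : S) : ℚ :=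
  (Fintype.card G : ℚ)⁻¹ * ∑ Gb ∈ (τ s).parts, (V2 v (buyersOf σ s) Gb : ℚ)

/-- Social welfare in the multi-seller game. -/
def SWm (v : B → G → ℕ) (τ : S → Finpartition (univ : Finset G)) (σ : B → S) : ℚ :=
  ((Fintype.card S : ℚ) * (Fintype.card G : ℚ))⁻¹ *
    ∑ s : S, ∑ Gb ∈ (τ s).parts, (V1 v (buyersOf σ s) Gb : ℚ)

/-- Social welfare in the single-seller (monopoly) game. -/
def SW1 (v : B → G → ℕ) (π : Finpartition (univ : Finset G)) : ℚ :=
  (Fintype.card G : ℚ)⁻¹ * ∑ Gb ∈ π.parts, (V1 v (univ : Finset B) Gb : ℚ)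

/-- The monopolist's revenue. -/
def rev1 (v : B → G → ℕ) (π : Finpartition (univ : Finset G)) : ℚ :=
  (Fintype.card G : ℚ)⁻¹ * ∑ Gb ∈ π.parts, (V2 v (univ : Finset B) Gb : ℚ)

/-- Buyer `b`'s utility in the monopoly game. -/
def ub1 (v : B → G → ℕ) (π : Finpartition (univ : Finset G)) (b : B) : ℚ :=
  (Fintype.card G : ℚ)⁻¹ *
    ∑ Gb ∈ π.parts, max ((vsum v b Gb : ℚ) - (V2 v (univ : Finset B) Gb : ℚ)) 0

/-- `π` refines `π̂`: every block of `π̂` is a union of blocks of `π`. -/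
def IsRefinement (π πhat : Finpartition (univ : Finset G)) : Prop :=
  ∀ t ∈ πhat.parts, ∃ P ⊆ π.parts, t = P.sup id

/-- `σ` is a (pure) Nash equilibrium of the buyers' subgame induced by `τ`. -/
def IsNash (v : B → G → ℕ) (τ : S → Finpartition (univ : Finset G)) (σ : B → S) : Prop :=
  ∀ (b : B) (s : S), ubuyer v τ (Function.update σ b s) b ≤ ubuyer v τ σ b

/-- `p^i(G)`: the number of goods demanded by at least `i` buyers. -/
def pdem (v : B → G → ℕ) (i : ℕ) : ℕ :=
  (univ.filter (fun g : G => i ≤ ∑ b : B, v b g)).card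

/-- The trivial (indiscrete) partition `{G}`, which discloses nothing. -/
def trivPart (G : Type*) [Fintype G] [DecidableEq G] [Nonempty G] :
    Finpartition (univ : Finset G) :=
  Finpartition.indiscrete Finset.univ_nonempty.ne_empty

/-- `(π, f)` is a pure subgame perfect equilibrium of the two-stage game. -/
def IsSPE (v : B → G → ℕ) (π : S → Finpartition (univ : Finset G))
    (f : (S → Finpartition (univ : Finset G)) → (B → S)) : Prop :=
  (∀ τ, IsNash v τ (f τ)) ∧
  ∀ (s : S) (ρ : Finpartition (univ : Finset G)),
    useller v (Function.update π s ρ) (f (Function.update π s ρ)) s ≤ useller v π (f π) s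

/-- an upper bound on the social welfare in the multi-seller
game: `SW ≤ (c₁ + min(|S|,|B|)·p²)/(|S|·|G|)` with `c₁ = p¹ − p²`. -/
theorem sw_upper_bound_competition [Nonempty B] [Nonempty G] [Nonempty S]
    (v : B → G → ℕ) (hv : ∀ b g, v b g ≤ 1)
    (τ : S → Finpartition (univ : Finset G)) (σ : B → S) :
    SWm v τ σ ≤
      (((pdem v 1 : ℚ) - (pdem v 2 : ℚ)) +
          (min (Fintype.card S) (Fintype.card B) : ℚ) * (pdem v 2 : ℚ)) /
        ((Fintype.card S : ℚ) * (Fintype.card G : ℚ)) := by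
  classical
  set m := min (Fintype.card S) (Fintype.card B) with hm
  set f : S → G → ℕ := fun s g => if ∃ b, σ b = s ∧ v b g = 1 then 1 else 0 with hf
  -- Step A: V1 ≤ sum of indicators
  have stepA : ∀ (s : S) (Gb : Finset G), V1 v (buyersOf σ s) Gb ≤ ∑ g ∈ Gb, f s g := by
    intro s Gb
    apply Finset.sup_le
    intro b hb
    have hbs : σ b = s := (Finset.mem_filter.mp hb).2
    apply Finset.sum_le_sum
    intro g _
    by_cases h : ∃ b, σ b = s ∧ v b g = 1
    · simp only [hf, if_pos h]
      exact hv b g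
    · simp only [hf, if_neg h]
      by_contra hc
      have h1 : v b g = 1 := le_antisymm (hv b g) (by omega)
      exact h ⟨b, hbs, h1⟩
  -- Step B: sum over parts equals sum over all goods
  have stepB : ∀ s : S, ∑ Gb ∈ (τ s).parts, ∑ g ∈ Gb, f s g = ∑ g : G, f s g := by
    intro s
    have huniv : (Finset.univ : Finset G) = (τ s).parts.biUnion id := by
      rw [← Finset.sup_eq_biUnion, (τ s).sup_parts]
    have h2 := Finset.sum_biUnion (s := (τ s).parts) (t := id) (f := f s) (τ s).disjoint
    rw [← huniv] at h2
    exact h2.symm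
  -- demand
  set d : G → ℕ := fun g => ∑ b : B, v b g with hd
  have hdcard : ∀ g, d g = (univ.filter (fun b : B => v b g = 1)).card := by
    intro g
    rw [Finset.card_filter]
    apply Finset.sum_congr rfl
    intro b _
    have := hv b g
    split <;> omega
  -- Step C/D: per-good bound
  have stepD : ∀ g : G, (∑ s : S, f s g) +
      (if 2 ≤ d g then 1 else 0) ≤ (if 1 ≤ d g then 1 else 0) +
        m * (if 2 ≤ d g then 1 else 0) := by
    intro g
    have hsum : (∑ s : S, f s g) =
        (univ.filter (fun s : S => ∃ b, σ b = s ∧ v b g = 1)).card := by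
      rw [Finset.card_filter]
    have hsub : (univ.filter (fun s : S => ∃ b, σ b = s ∧ v b g = 1)) ⊆
        (univ.filter (fun b : B => v b g = 1)).image σ := by
      intro s hs
      obtain ⟨b, hb1, hb2⟩ := (Finset.mem_filter.mp hs).2
      exact Finset.mem_image.mpr ⟨b, Finset.mem_filter.mpr ⟨Finset.mem_univ b, hb2⟩, hb1⟩
    have h1 : (∑ s : S, f s g) ≤ d g := by
      rw [hsum, hdcard]
      exact le_trans (Finset.card_le_card hsub) Finset.card_image_le
    have h2 : (∑ s : S, f s g) ≤ Fintype.card S := by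
      rw [hsum]
      exact le_trans (Finset.card_filter_le _ _) (by simp)
    have h3 : d g ≤ Fintype.card B := by
      rw [hdcard]
      exact le_trans (Finset.card_filter_le _ _) (by simp)
    rw [hsum] at h1 h2 ⊢
    by_cases h2d : 2 ≤ d g
    · have h1d : 1 ≤ d g := by omega
      have hmin : #(filter (fun s => ∃ b, σ b = s ∧ v b g = 1) univ) ≤ m :=
        le_min h2 (le_trans h1 h3)
      simp only [if_pos h2d, if_pos h1d, mul_one]
      omega
    · by_cases h1d : 1 ≤ d g
      · simp only [if_neg h2d, if_pos h1d, mul_zero]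
        omega
      · have hd0 : d g = 0 := by omega
        simp only [if_neg h2d, if_neg h1d, mul_zero]
        omega
  -- the key natural-number inequality
  have hpdem : ∀ i : ℕ, (pdem v i : ℕ) = ∑ g : G, (if i ≤ d g then 1 else 0) := by
    intro i
    rw [pdem, Finset.card_filter]
  have key : (∑ s : S, ∑ Gb ∈ (τ s).parts, V1 v (buyersOf σ s) Gb) + pdem v 2
      ≤ pdem v 1 + m * pdem v 2 := by
    have h1 : (∑ s : S, ∑ Gb ∈ (τ s).parts, V1 v (buyersOf σ s) Gb)
        ≤ ∑ g : G, ∑ s : S, f s g := by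
      rw [Finset.sum_comm]
      calc ∑ s : S, ∑ Gb ∈ (τ s).parts, V1 v (buyersOf σ s) Gb
          ≤ ∑ s : S, ∑ Gb ∈ (τ s).parts, ∑ g ∈ Gb, f s g :=
            Finset.sum_le_sum fun s _ => Finset.sum_le_sum fun Gb _ => stepA s Gb
        _ = ∑ s : S, ∑ g : G, f s g := Finset.sum_congr rfl fun s _ => stepB s
    have h2 : (∑ g : G, ∑ s : S, f s g) + pdem v 2 ≤ pdem v 1 + m * pdem v 2 := by
      rw [hpdem 1, hpdem 2, ← Finset.sum_add_distrib, Finset.mul_sum,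
        ← Finset.sum_add_distrib]
      exact Finset.sum_le_sum fun g _ => stepD g
    omega
  -- conclude over ℚ
  have hS : (0 : ℚ) < (Fintype.card S : ℚ) := by
    exact_mod_cast Fintype.card_pos
  have hG : (0 : ℚ) < (Fintype.card G : ℚ) := by
    exact_mod_cast Fintype.card_pos
  have hD : (0 : ℚ) < (Fintype.card S : ℚ) * (Fintype.card G : ℚ) := mul_pos hS hG
  rw [SWm, inv_mul_eq_div, div_le_div_iff₀ hD hD]
  have hcast : (∑ s : S, ∑ Gb ∈ (τ s).parts, (V1 v (buyersOf σ s) Gb : ℚ))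
      = ((∑ s : S, ∑ Gb ∈ (τ s).parts, V1 v (buyersOf σ s) Gb : ℕ) : ℚ) := by
    push_cast
    rfl
  rw [hcast]
  have : ((∑ s : S, ∑ Gb ∈ (τ s).parts, V1 v (buyersOf σ s) Gb : ℕ) : ℚ)
      ≤ ((pdem v 1 : ℚ) - (pdem v 2 : ℚ)) + (m : ℚ) * (pdem v 2 : ℚ) := by
    have := key
    have h := (Nat.cast_le (α := ℚ)).mpr this
    push_cast at h ⊢
    linarith
  calc ((∑ s : S, ∑ Gb ∈ (τ s).parts, V1 v (buyersOf σ s) Gb : ℕ) : ℚ) *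
        ((Fintype.card S : ℚ) * (Fintype.card G : ℚ))
      ≤ (((pdem v 1 : ℚ) - (pdem v 2 : ℚ)) + (m : ℚ) * (pdem v 2 : ℚ)) *
        ((Fintype.card S : ℚ) * (Fintype.card G : ℚ)) := by
        apply mul_le_mul_of_nonneg_right this (le_of_lt hD)
    _ = _ := by rw [hm, Nat.cast_min]
end

section
/- Suppose |B| ≥ 2 and |S| ≥ 2. Let π̂ be any revenue-maximizing single-seller partition of G. Then for every seller profile τ and every buyer assignment σ in the |S|-seller game, |S|·SW(τ,σ) ≤ (|S|+1)·SW(π̂); that is, competition among the sellers can exceed the welfare of a revenue-maximizing monopoly by a factor of at most 1 + 1/|S|. -/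
open Finset

variable {B G S : Type*} [Fintype B] [Fintype G] [Fintype S]
variable [DecidableEq B] [DecidableEq G] [DecidableEq S]

set_option linter.unusedSectionVars false
section AuxBasic

variable {B G : Type*} [Fintype B] [Fintype G] [DecidableEq B] [DecidableEq G]

/-- total demand of a good -/
def dm (v : B → G → ℕ) (g : G) : ℕ := ∑ b : B, v b g

/-- the goods in `t` demanded exactly once, namely by `b` -/
def Aset (v : B → G → ℕ) (b : B) (t : Finset G) : Finset G :=
  t.filter (fun g => dm v g = 1 ∧ v b g = 1)

lemma Aset_subset {v : B → G → ℕ} {b : B} {t : Finset G} : Aset v b t ⊆ t :=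
  Finset.filter_subset _ _

lemma mem_Aset {v : B → G → ℕ} {b : B} {t : Finset G} {g : G} (h : g ∈ Aset v b t) :
    g ∈ t ∧ dm v g = 1 ∧ v b g = 1 := by
  simpa [Aset] using (by simpa [Aset] using h)

lemma Aset_card_le_vsum {v : B → G → ℕ} {b : B} {t : Finset G} :
    (Aset v b t).card ≤ vsum v b t := by
  calc (Aset v b t).card = ∑ g ∈ Aset v b t, 1 := by simp
    _ = ∑ g ∈ Aset v b t, v b g := by
        refine Finset.sum_congr rfl fun g hg => ?_
        exact ((mem_Aset hg).2.2).symm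
    _ ≤ ∑ g ∈ t, v b g := Finset.sum_le_sum_of_subset Aset_subset
    _ = vsum v b t := rfl

lemma Aset_disjoint {v : B → G → ℕ} {b b' : B} {t : Finset G} (hne : b ≠ b') :
    Disjoint (Aset v b t) (Aset v b' t) := by
  rw [Finset.disjoint_left]
  intro g hg hg'
  obtain ⟨-, hd, hb⟩ := mem_Aset hg
  obtain ⟨-, -, hb'⟩ := mem_Aset hg'
  have h2 : v b g + v b' g ≤ dm v g := by
    have := Finset.sum_le_sum_of_subset (s := ({b, b'} : Finset B)) (t := (univ : Finset B))
      (fun x _ => mem_univ x) (f := fun x => v x g)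
    rwa [Finset.sum_pair hne] at this
  omega

lemma vsum_le_V1 {v : B → G → ℕ} {b : B} {Bb : Finset B} {t : Finset G} (hb : b ∈ Bb) :
    vsum v b t ≤ V1 v Bb t :=
  Finset.le_sup (f := fun b' => vsum v b' t) hb

lemma V1_empty_goods {v : B → G → ℕ} {Bb : Finset B} : V1 v Bb (∅ : Finset G) = 0 := by
  refine Nat.le_antisymm (Finset.sup_le fun b _ => ?_) (Nat.zero_le _)
  simp [vsum]

lemma V2_empty_goods {v : B → G → ℕ} {Bb : Finset B} : V2 v Bb (∅ : Finset G) = 0 := by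
  rw [V2]
  split
  · next h =>
      refine Nat.le_antisymm ?_ (Nat.zero_le _)
      refine le_trans (Finset.inf'_le _ h.choose_spec) ?_
      simp [V1_empty_goods]
  · rfl

lemma V2_le_V1 {v : B → G → ℕ} {Bb : Finset B} {t : Finset G} : V2 v Bb t ≤ V1 v Bb t := by
  rw [V2]
  split
  · next h =>
      refine le_trans (Finset.inf'_le _ h.choose_spec) ?_
      exact Finset.sup_mono (Finset.erase_subset _ _)
  · exact Nat.zero_le _

lemma min_le_V2 [Nonempty B] {v : B → G → ℕ} {b b' : B} {t : Finset G} (hne : b ≠ b') :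
    min (vsum v b t) (vsum v b' t) ≤ V2 v (univ : Finset B) t := by
  have hne' : (univ : Finset B).Nonempty := Finset.univ_nonempty
  rw [V2, dif_pos hne']
  refine Finset.le_inf' _ _ fun c _ => ?_
  rcases eq_or_ne b c with rfl | h
  · exact le_trans (min_le_right _ _)
      (Finset.le_sup (f := fun x => vsum v x t) (Finset.mem_erase.mpr ⟨hne.symm, mem_univ _⟩))
  · exact le_trans (min_le_left _ _)
      (Finset.le_sup (f := fun x => vsum v x t) (Finset.mem_erase.mpr ⟨h, mem_univ _⟩))

lemma one_le_V2_singleton [Nonempty B] {v : B → G → ℕ} (hv : ∀ b g, v b g ≤ 1) {g : G}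
    (h2 : 2 ≤ dm v g) : 1 ≤ V2 v (univ : Finset B) ({g} : Finset G) := by
  have hcard : 2 ≤ (univ.filter (fun b => v b g = 1)).card := by
    have : dm v g ≤ (univ.filter (fun b => v b g = 1)).card := by
      rw [Finset.card_filter]
      refine Finset.sum_le_sum fun b _ => ?_
      have := hv b g
      split <;> omega
    omega
  obtain ⟨b, hb, b', hb', hne⟩ := Finset.one_lt_card.mp
    (show 1 < (univ.filter (fun b => v b g = 1)).card by omega)
  have h1 : vsum v b ({g} : Finset G) = 1 := by
    simp [vsum, (Finset.mem_filter.mp hb).2]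
  have h1' : vsum v b' ({g} : Finset G) = 1 := by
    simp [vsum, (Finset.mem_filter.mp hb').2]
  have := min_le_V2 (v := v) (t := ({g} : Finset G)) hne
  rw [h1, h1'] at this
  simpa using this

/-- summing over the parts of a finpartition of `univ` equals summing over `univ`. -/
lemma Finpartition.sum_parts_sum {α : Type*} [Fintype α] [DecidableEq α]
    (π : Finpartition (univ : Finset α)) (f : α → ℕ) :
    ∑ t ∈ π.parts, ∑ g ∈ t, f g = ∑ g, f g := by
  have hdisj : (π.parts : Set (Finset α)).PairwiseDisjoint id :=
    Finset.supIndep_iff_pairwiseDisjoint.mp π.supIndep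
  calc ∑ t ∈ π.parts, ∑ g ∈ t, f g = ∑ g ∈ π.parts.biUnion id, f g :=
        (Finset.sum_biUnion hdisj).symm
    _ = ∑ g, f g := by rw [← Finset.sup_eq_biUnion, π.sup_parts]

end AuxBasic
section AuxList

variable {B G : Type*} [Fintype B] [Fintype G] [DecidableEq B] [DecidableEq G]

/-- generalization of `Aset_card_le_vsum` -/
lemma Aset_card_le_vsum' {v : B → G → ℕ} {b : B} {t u : Finset G} (h : Aset v b t ⊆ u) :
    (Aset v b t).card ≤ vsum v b u := by
  calc (Aset v b t).card = ∑ g ∈ Aset v b t, 1 := by simp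
    _ = ∑ g ∈ Aset v b t, v b g := by
        refine Finset.sum_congr rfl fun g hg => ?_
        exact ((mem_Aset hg).2.2).symm
    _ ≤ ∑ g ∈ u, v b g := Finset.sum_le_sum_of_subset h
    _ = vsum v b u := rfl

/-- the paired parts built from a list of buyers -/
def pairsOf (v : B → G → ℕ) (t : Finset G) : List B → List (Finset G)
  | x :: y :: r => (Aset v x t ∪ Aset v y t) :: pairsOf v t r
  | _ => []

/-- value of the head buyer -/
def hval (v : B → G → ℕ) (t : Finset G) : List B → ℕ
  | [] => 0
  | x :: _ => (Aset v x t).card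

/-- union of a list of finsets -/
def Ufold : List (Finset G) → Finset G
  | [] => ∅
  | u :: r => u ∪ Ufold r

lemma mem_Ufold {L : List (Finset G)} {g : G} : g ∈ Ufold L ↔ ∃ u ∈ L, g ∈ u := by
  induction L with
  | nil => simp [Ufold]
  | cons u r ih => simp [Ufold, ih]

lemma mem_of_mem_pairsOf {v : B → G → ℕ} {t : Finset G} :
    ∀ {l : List B} {u : Finset G}, u ∈ pairsOf v t l → ∀ g ∈ u, ∃ b ∈ l, g ∈ Aset v b t
  | [], u => by simp [pairsOf]
  | [x], u => by simp [pairsOf]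
  | x :: y :: r, u => by
    intro hu g hg
    rw [pairsOf] at hu
    rcases List.mem_cons.mp hu with rfl | hu
    · rcases Finset.mem_union.mp hg with h | h
      · exact ⟨x, by simp, h⟩
      · exact ⟨y, by simp, h⟩
    · obtain ⟨b, hb, hgb⟩ := mem_of_mem_pairsOf hu g hg
      exact ⟨b, by simp [hb, List.mem_cons], hgb⟩

lemma pairsOf_subset {v : B → G → ℕ} {t : Finset G} {l : List B} {u : Finset G}
    (hu : u ∈ pairsOf v t l) : u ⊆ t := by
  intro g hg
  obtain ⟨b, -, hgb⟩ := mem_of_mem_pairsOf hu g hg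
  exact Aset_subset hgb

lemma dm_of_mem_pairsOf {v : B → G → ℕ} {t : Finset G} {l : List B} {u : Finset G}
    (hu : u ∈ pairsOf v t l) {g : G} (hg : g ∈ u) : dm v g = 1 := by
  obtain ⟨b, -, hgb⟩ := mem_of_mem_pairsOf hu g hg
  exact (mem_Aset hgb).2.1

lemma disjoint_Aset_pairsOf {v : B → G → ℕ} {t : Finset G} {l : List B} {x : B}
    (hx : x ∉ l) {u : Finset G} (hu : u ∈ pairsOf v t l) : Disjoint (Aset v x t) u := by
  rw [Finset.disjoint_left]
  intro g hg hgu
  obtain ⟨b, hb, hgb⟩ := mem_of_mem_pairsOf hu g hgu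
  have hne : x ≠ b := fun h => hx (h ▸ hb)
  exact Finset.disjoint_left.mp (Aset_disjoint hne) hg hgb

lemma pairsOf_pairwise_disjoint {v : B → G → ℕ} {t : Finset G} :
    ∀ {l : List B}, l.Nodup → (pairsOf v t l).Pairwise Disjoint
  | [], _ => by simp [pairsOf]
  | [x], _ => by simp [pairsOf]
  | x :: y :: r, h => by
    rw [pairsOf]
    have hx : x ∉ r := fun hc => (List.nodup_cons.mp h).1 (List.mem_cons_of_mem _ hc)
    have hy : y ∉ r := (List.nodup_cons.mp (List.nodup_cons.mp h).2).1
    refine List.Pairwise.cons (fun u hu => ?_) (pairsOf_pairwise_disjoint (List.nodup_cons.mp (List.nodup_cons.mp h).2).2)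
    rw [Finset.disjoint_union_left]
    exact ⟨disjoint_Aset_pairsOf hx hu, disjoint_Aset_pairsOf hy hu⟩

/-- key list inequality: twice the sum of `V2` over the paired parts plus the head
value dominates the total. -/
lemma pairs_sum_bound [Nonempty B] {v : B → G → ℕ} {t : Finset G} :
    ∀ {l : List B}, l.Nodup → l.Pairwise (fun b b' => (Aset v b' t).card ≤ (Aset v b t).card) →
      (l.map (fun b => (Aset v b t).card)).sum ≤
        2 * ((pairsOf v t l).map (V2 v (univ : Finset B))).sum + hval v t l
  | [], _, _ => by simp [pairsOf, hval]
  | [x], _, _ => by simp [pairsOf, hval]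
  | x :: y :: r, hnd, hsort => by
    have hxy : x ≠ y := by
      intro h
      exact (List.nodup_cons.mp hnd).1 (h ▸ List.mem_cons_self)
    have hsort' : (y :: r).Pairwise (fun b b' => (Aset v b' t).card ≤ (Aset v b t).card) :=
      (List.pairwise_cons.mp hsort).2
    have hnd' : (y :: r).Nodup := (List.nodup_cons.mp hnd).2
    have ih := pairs_sum_bound (v := v) (t := t) (l := r)
      (List.nodup_cons.mp hnd').2 (List.pairwise_cons.mp hsort').2
    have hyx : (Aset v y t).card ≤ (Aset v x t).card :=
      (List.pairwise_cons.mp hsort).1 y (List.mem_cons_self)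
    have hheadV2 : (Aset v y t).card ≤ V2 v (univ : Finset B) (Aset v x t ∪ Aset v y t) := by
      have h1 : (Aset v x t).card ≤ vsum v x (Aset v x t ∪ Aset v y t) :=
        Aset_card_le_vsum' Finset.subset_union_left
      have h2 : (Aset v y t).card ≤ vsum v y (Aset v x t ∪ Aset v y t) :=
        Aset_card_le_vsum' Finset.subset_union_right
      have := min_le_V2 (v := v) (t := Aset v x t ∪ Aset v y t) hxy
      omega
    have hvr : hval v t r ≤ (Aset v y t).card := by
      cases r with
      | nil => simp [hval]
      | cons z r' =>
        have := (List.pairwise_cons.mp hsort').1 z (List.mem_cons_self)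
        simpa [hval] using this
    rw [pairsOf]
    simp only [List.map_cons, List.sum_cons]
    have : hval v t (x :: y :: r) = (Aset v x t).card := rfl
    rw [this]
    omega

end AuxList
section AuxPart

variable {B G : Type*} [Fintype B] [Fintype G] [DecidableEq B] [DecidableEq G]

/-- ordering of buyers by decreasing value of `Aset` -/
def brel (v : B → G → ℕ) (t : Finset G) : B → B → Prop :=
  fun b b' => (Aset v b' t).card ≤ (Aset v b t).card

instance {v : B → G → ℕ} {t : Finset G} : DecidableRel (brel v t) := fun _ _ => by
  unfold brel; infer_instance

instance {v : B → G → ℕ} {t : Finset G} : IsTotal B (brel v t) :=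
  ⟨fun a b => le_total _ _⟩

instance {v : B → G → ℕ} {t : Finset G} : IsTrans B (brel v t) :=
  ⟨fun _ _ _ h1 h2 => le_trans h2 h1⟩

/-- all buyers, sorted by decreasing value of `Aset` -/
noncomputable def blist (v : B → G → ℕ) (t : Finset G) : List B :=
  List.insertionSort (brel v t) univ.toList

lemma blist_perm {v : B → G → ℕ} {t : Finset G} : List.Perm (blist v t) (univ : Finset B).toList :=
  List.perm_insertionSort _ _

lemma blist_nodup {v : B → G → ℕ} {t : Finset G} : (blist v t).Nodup :=
  (blist_perm (v := v) (t := t)).nodup_iff.mpr (Finset.nodup_toList _)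

lemma blist_sorted {v : B → G → ℕ} {t : Finset G} : (blist v t).Pairwise (brel v t) :=
  List.pairwise_insertionSort (r := brel v t) _

lemma blist_ne_nil [Nonempty B] {v : B → G → ℕ} {t : Finset G} : blist v t ≠ [] := by
  intro h
  have : (Classical.arbitrary B) ∈ blist v t :=
    (blist_perm (v := v) (t := t)).mem_iff.mpr (by simp [Finset.mem_toList])
  simp [h] at this

/-- the nonempty paired parts -/
noncomputable def pairParts (v : B → G → ℕ) (t : Finset G) : List (Finset G) :=
  (pairsOf v t (blist v t)).filter (fun u => u ≠ ∅)

/-- union of the paired parts -/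
noncomputable def UU (v : B → G → ℕ) (t : Finset G) : Finset G := Ufold (pairsOf v t (blist v t))

lemma UU_dm {v : B → G → ℕ} {t : Finset G} {g : G} (hg : g ∈ UU v t) : dm v g = 1 := by
  obtain ⟨u, hu, hgu⟩ := mem_Ufold.mp hg
  exact dm_of_mem_pairsOf hu hgu

/-- the refined family of parts inside `t` -/
noncomputable def localParts (v : B → G → ℕ) (t : Finset G) : Finset (Finset G) :=
  (pairParts v t).toFinset ∪ (t \ UU v t).image (fun g => ({g} : Finset G))

lemma mem_pairParts_subset_UU {v : B → G → ℕ} {t : Finset G} {u : Finset G}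
    (hu : u ∈ pairParts v t) : u ⊆ UU v t := by
  intro g hg
  exact mem_Ufold.mpr ⟨u, List.mem_of_mem_filter hu, hg⟩

lemma localParts_subset {v : B → G → ℕ} {t : Finset G} {u : Finset G}
    (hu : u ∈ localParts v t) : u ⊆ t := by
  rcases Finset.mem_union.mp hu with h | h
  · exact pairsOf_subset (List.mem_of_mem_filter (List.mem_toFinset.mp h))
  · obtain ⟨g, hg, rfl⟩ := Finset.mem_image.mp h
    simpa using (Finset.mem_sdiff.mp hg).1

lemma localParts_nonempty {v : B → G → ℕ} {t : Finset G} {u : Finset G}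
    (hu : u ∈ localParts v t) : u.Nonempty := by
  rcases Finset.mem_union.mp hu with h | h
  · rw [Finset.nonempty_iff_ne_empty]
    simpa using (List.mem_filter.mp (List.mem_toFinset.mp h)).2
  · obtain ⟨g, hg, rfl⟩ := Finset.mem_image.mp h
    exact ⟨g, Finset.mem_singleton_self g⟩

lemma localParts_disjoint {v : B → G → ℕ} {t : Finset G} {u₁ u₂ : Finset G}
    (h₁ : u₁ ∈ localParts v t) (h₂ : u₂ ∈ localParts v t) (hne : u₁ ≠ u₂) :
    Disjoint u₁ u₂ := by
  have hpp : (pairParts v t).Pairwise Disjoint :=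
    (pairsOf_pairwise_disjoint blist_nodup).sublist (List.filter_sublist)
  rcases Finset.mem_union.mp h₁ with ha | ha <;> rcases Finset.mem_union.mp h₂ with hb | hb
  · exact (haveI : Std.Symm (Disjoint : Finset G → Finset G → Prop) := ⟨fun _ _ h => h.symm⟩
      hpp.forall (List.mem_toFinset.mp ha) (List.mem_toFinset.mp hb) hne)
  · obtain ⟨g, hg, rfl⟩ := Finset.mem_image.mp hb
    rw [Finset.disjoint_singleton_right]
    intro hgu
    exact (Finset.mem_sdiff.mp hg).2 (mem_pairParts_subset_UU (List.mem_toFinset.mp ha) hgu)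
  · obtain ⟨g, hg, rfl⟩ := Finset.mem_image.mp ha
    rw [Finset.disjoint_singleton_left]
    intro hgu
    exact (Finset.mem_sdiff.mp hg).2 (mem_pairParts_subset_UU (List.mem_toFinset.mp hb) hgu)
  · obtain ⟨g, hg, rfl⟩ := Finset.mem_image.mp ha
    obtain ⟨g', hg', rfl⟩ := Finset.mem_image.mp hb
    have : g ≠ g' := fun h => hne (by rw [h])
    rw [Finset.disjoint_singleton_left, Finset.mem_singleton]
    exact this

lemma localParts_sup {v : B → G → ℕ} {t : Finset G} : (localParts v t).sup id = t := by
  apply le_antisymm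
  · exact Finset.sup_le fun u hu => localParts_subset hu
  · intro g hg
    rw [Finset.mem_sup]
    by_cases hU : g ∈ UU v t
    · obtain ⟨u, hu, hgu⟩ := mem_Ufold.mp hU
      have hu' : u ∈ pairParts v t := by
        rw [pairParts, List.mem_filter]
        refine ⟨hu, ?_⟩
        simp only [ne_eq, decide_eq_true_eq]
        exact fun h => by simp [h] at hgu
      exact ⟨u, Finset.mem_union_left _ (List.mem_toFinset.mpr hu'), hgu⟩
    · refine ⟨{g}, Finset.mem_union_right _ ?_, Finset.mem_singleton_self g⟩
      exact Finset.mem_image.mpr ⟨g, Finset.mem_sdiff.mpr ⟨hg, hU⟩, rfl⟩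

/-- sums over a list after discarding empty sets -/
lemma sum_map_filter_ne_empty {f : Finset G → ℕ} (hf : f ∅ = 0) :
    ∀ L : List (Finset G), ((L.filter (fun u => u ≠ ∅)).map f).sum = (L.map f).sum
  | [] => rfl
  | u :: r => by
    by_cases h : u = ∅
    · simpa [h, hf, List.filter_cons] using sum_map_filter_ne_empty hf r
    · simpa [h, List.filter_cons] using sum_map_filter_ne_empty hf r

lemma pairParts_nodup {v : B → G → ℕ} {t : Finset G} : (pairParts v t).Nodup := by
  have hpp : (pairParts v t).Pairwise Disjoint :=
    (pairsOf_pairwise_disjoint blist_nodup).sublist (List.filter_sublist)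
  refine List.Pairwise.imp_of_mem ?_ hpp
  intro u u' hu _ hd
  intro h
  subst h
  have : u = ∅ := disjoint_self.mp hd
  have hne : u ≠ ∅ := by simpa using (List.mem_filter.mp hu).2
  exact hne this

/-- the key lower bound on the total `V2` of the refined parts of `t` -/
lemma localParts_V2_sum [Nonempty B] {v : B → G → ℕ} (hv : ∀ b g, v b g ≤ 1) {t : Finset G} :
    (∑ g ∈ t, if 2 ≤ dm v g then 1 else 0) +
      ((pairsOf v t (blist v t)).map (V2 v (univ : Finset B))).sum ≤
      ∑ u ∈ localParts v t, V2 v (univ : Finset B) u := by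
  have hdisj : Disjoint (pairParts v t).toFinset ((t \ UU v t).image (fun g => ({g} : Finset G))) := by
    rw [Finset.disjoint_left]
    intro u hu hu'
    obtain ⟨g, hg, rfl⟩ := Finset.mem_image.mp hu'
    exact (Finset.mem_sdiff.mp hg).2
      (mem_pairParts_subset_UU (List.mem_toFinset.mp hu) (Finset.mem_singleton_self g))
  rw [localParts, Finset.sum_union hdisj]
  have h1 : ∑ u ∈ (pairParts v t).toFinset, V2 v (univ : Finset B) u =
      ((pairsOf v t (blist v t)).map (V2 v (univ : Finset B))).sum := by
    rw [List.sum_toFinset _ pairParts_nodup]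
    exact sum_map_filter_ne_empty V2_empty_goods _
  have h2 : (∑ g ∈ t, if 2 ≤ dm v g then 1 else 0) ≤
      ∑ u ∈ (t \ UU v t).image (fun g => ({g} : Finset G)), V2 v (univ : Finset B) u := by
    rw [Finset.sum_image (fun g _ g' _ h => Finset.singleton_injective h)]
    have : (∑ g ∈ t, if 2 ≤ dm v g then 1 else 0) =
        ∑ g ∈ t \ UU v t, if 2 ≤ dm v g then 1 else 0 := by
      refine (Finset.sum_subset (Finset.sdiff_subset) fun g hg hg' => ?_).symm
      have : g ∈ UU v t := by
        by_contra h
        exact hg' (Finset.mem_sdiff.mpr ⟨hg, h⟩)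
      have := UU_dm this
      simp [this]
    rw [this]
    refine Finset.sum_le_sum fun g hg => ?_
    split
    · next h => exact one_le_V2_singleton hv h
    · exact Nat.zero_le _
  omega

end AuxPart
section AuxMain

variable {B G : Type*} [Fintype B] [Fintype G] [DecidableEq B] [DecidableEq G]

/-- abbreviation for the `V2`-sum of the paired parts of `t` -/
noncomputable def Pv2 (v : B → G → ℕ) (t : Finset G) : ℕ :=
  ((pairsOf v t (blist v t)).map (V2 v (univ : Finset B))).sum

lemma sum_Aset_card {v : B → G → ℕ} (hv : ∀ b g, v b g ≤ 1) (t : Finset G) :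
    ∑ b : B, (Aset v b t).card = ∑ g ∈ t, (if dm v g = 1 then 1 else 0) := by
  have hA : ∀ b : B, (Aset v b t).card = ∑ g ∈ t.filter (fun g => dm v g = 1), v b g := by
    intro b
    have : Aset v b t = (t.filter (fun g => dm v g = 1)).filter (fun g => v b g = 1) := by
      rw [Finset.filter_filter]; rfl
    rw [this, Finset.card_filter]
    refine Finset.sum_congr rfl fun g _ => ?_
    have := hv b g
    split <;> omega
  calc ∑ b : B, (Aset v b t).card
      = ∑ b : B, ∑ g ∈ t.filter (fun g => dm v g = 1), v b g :=
        Finset.sum_congr rfl fun b _ => hA b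
    _ = ∑ g ∈ t.filter (fun g => dm v g = 1), ∑ b : B, v b g := Finset.sum_comm
    _ = ∑ g ∈ t.filter (fun g => dm v g = 1), 1 := by
        refine Finset.sum_congr rfl fun g hg => ?_
        exact (Finset.mem_filter.mp hg).2
    _ = (t.filter (fun g => dm v g = 1)).card := by simp
    _ = ∑ g ∈ t, (if dm v g = 1 then 1 else 0) := Finset.card_filter _ _

/-- per-part inequality: the once-demanded goods are dominated by twice the paired
`V2`-sum plus the top value. -/
lemma nd1_le [Nonempty B] {v : B → G → ℕ} (hv : ∀ b g, v b g ≤ 1) (t : Finset G) :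
    (∑ g ∈ t, if dm v g = 1 then 1 else 0) ≤
      2 * Pv2 v t + V1 v (univ : Finset B) t := by
  have hb := pairs_sum_bound (v := v) (t := t) blist_nodup blist_sorted
  have hsum : ((blist v t).map (fun b => (Aset v b t).card)).sum =
      ∑ g ∈ t, (if dm v g = 1 then 1 else 0) := by
    rw [List.Perm.sum_eq (List.Perm.map _ (blist_perm (v := v) (t := t)))]
    rw [← sum_Aset_card hv t]
    rw [← List.sum_toFinset _ (Finset.nodup_toList _), Finset.toList_toFinset]
  have hhead : hval v t (blist v t) ≤ V1 v (univ : Finset B) t := by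
    cases hbl : blist v t with
    | nil => exact absurd hbl blist_ne_nil
    | cons x r =>
      show (Aset v x t).card ≤ V1 v (univ : Finset B) t
      exact le_trans Aset_card_le_vsum (vsum_le_V1 (mem_univ x))
  rw [hsum] at hb
  have hPdef : Pv2 v t = ((pairsOf v t (blist v t)).map (V2 v (univ : Finset B))).sum := rfl
  omega

/-- the comparison partition: refine each part of `πhat` into its paired parts and
singletons. -/
noncomputable def compPart (v : B → G → ℕ) (πhat : Finpartition (univ : Finset G)) :
    Finpartition (univ : Finset G) :=
  Finpartition.ofErase (πhat.parts.biUnion (fun t => localParts v t))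
    (by
      rw [Finset.supIndep_iff_pairwiseDisjoint]
      intro u₁ h₁ u₂ h₂ hne
      simp only [Function.onFun, id]
      obtain ⟨t₁, ht₁, hu₁⟩ := Finset.mem_biUnion.mp (Finset.mem_coe.mp h₁)
      obtain ⟨t₂, ht₂, hu₂⟩ := Finset.mem_biUnion.mp (Finset.mem_coe.mp h₂)
      rcases eq_or_ne t₁ t₂ with rfl | hT
      · exact localParts_disjoint hu₁ hu₂ hne
      · have hd : Disjoint t₁ t₂ :=
          (Finset.supIndep_iff_pairwiseDisjoint.mp πhat.supIndep) ht₁ ht₂ hT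
        exact hd.mono (localParts_subset hu₁) (localParts_subset hu₂))
    (by
      rw [Finset.sup_biUnion]
      calc πhat.parts.sup (fun t => (localParts v t).sup id)
          = πhat.parts.sup id := Finset.sup_congr rfl fun t _ => localParts_sup
        _ = univ := πhat.sup_parts)

lemma compPart_V2_sum [Nonempty B] {v : B → G → ℕ} (hv : ∀ b g, v b g ≤ 1)
    (πhat : Finpartition (univ : Finset G)) :
    (∑ t ∈ πhat.parts, ((∑ g ∈ t, if 2 ≤ dm v g then 1 else 0) + Pv2 v t)) ≤
      ∑ u ∈ (compPart v πhat).parts, V2 v (univ : Finset B) u := by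
  have hparts : (compPart v πhat).parts =
      (πhat.parts.biUnion (fun t => localParts v t)).erase ∅ := rfl
  rw [hparts, Finset.sum_erase _ (V2_empty_goods)]
  have hdisj : (πhat.parts : Set (Finset G)).PairwiseDisjoint (fun t => localParts v t) := by
    intro t₁ ht₁ t₂ ht₂ hT
    simp only [Function.onFun]
    rw [Finset.disjoint_left]
    intro u hu₁ hu₂
    have hne := localParts_nonempty hu₁
    have hd : Disjoint t₁ t₂ :=
      (Finset.supIndep_iff_pairwiseDisjoint.mp πhat.supIndep) ht₁ ht₂ hT
    have hdd := hd.mono (localParts_subset hu₁) (localParts_subset hu₂)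
    rw [disjoint_self] at hdd
    exact Finset.Nonempty.ne_empty (hdd ▸ hne) rfl
  rw [Finset.sum_biUnion hdisj]
  exact Finset.sum_le_sum fun t _ => localParts_V2_sum hv

/-- main combinatorial inequality, in `ℕ`. -/
lemma main_nat [Nonempty B] {v : B → G → ℕ} (hv : ∀ b g, v b g ≤ 1)
    (πhat : Finpartition (univ : Finset G))
    (hrev : ∑ u ∈ (compPart v πhat).parts, V2 v (univ : Finset B) u ≤
      ∑ t ∈ πhat.parts, V2 v (univ : Finset B) t) (k : ℕ) :
    pdem v 1 + (k + 1) * pdem v 2 ≤ (k + 3) * ∑ t ∈ πhat.parts, V1 v (univ : Finset B) t := by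
  set W := ∑ t ∈ πhat.parts, V1 v (univ : Finset B) t with hW
  set R := ∑ t ∈ πhat.parts, V2 v (univ : Finset B) t with hR
  set N1 := ∑ t ∈ πhat.parts, ∑ g ∈ t, (if dm v g = 1 then 1 else 0) with hN1
  set N2 := ∑ t ∈ πhat.parts, ∑ g ∈ t, (if 2 ≤ dm v g then 1 else 0) with hN2
  set P := ∑ t ∈ πhat.parts, Pv2 v t with hP
  have hRW : R ≤ W := Finset.sum_le_sum fun t _ => V2_le_V1
  have hPN2 : N2 + P ≤ R := by
    have h := compPart_V2_sum hv πhat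
    rw [Finset.sum_add_distrib] at h
    exact le_trans h hrev
  have hN1le : N1 ≤ 2 * P + W := by
    have h : N1 ≤ ∑ t ∈ πhat.parts, (2 * Pv2 v t + V1 v (univ : Finset B) t) :=
      Finset.sum_le_sum fun t _ => nd1_le hv t
    rwa [Finset.sum_add_distrib, ← Finset.mul_sum, ← hP, ← hW] at h
  have key : ∀ g : G, (if 1 ≤ dm v g then (1:ℕ) else 0) =
      (if dm v g = 1 then 1 else 0) + (if 2 ≤ dm v g then 1 else 0) := by
    intro g
    split_ifs <;> omega
  have hp1 : pdem v 1 = N1 + N2 := by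
    calc pdem v 1 = ∑ g, (if 1 ≤ dm v g then 1 else 0) := Finset.card_filter _ _
      _ = ∑ g, ((if dm v g = 1 then 1 else 0) + (if 2 ≤ dm v g then 1 else 0)) :=
        Finset.sum_congr rfl fun g _ => key g
      _ = (∑ g, (if dm v g = 1 then (1:ℕ) else 0)) + ∑ g, (if 2 ≤ dm v g then 1 else 0) :=
        Finset.sum_add_distrib
      _ = N1 + N2 := by
        rw [hN1, hN2, Finpartition.sum_parts_sum, Finpartition.sum_parts_sum]
  have hp2 : pdem v 2 = N2 := by
    calc pdem v 2 = ∑ g, (if 2 ≤ dm v g then 1 else 0) := Finset.card_filter _ _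
      _ = N2 := by rw [hN2, Finpartition.sum_parts_sum]
  have expand : pdem v 1 + (k + 1) * pdem v 2 = N1 + 2 * N2 + k * N2 := by
    rw [hp1, hp2]; ring
  have expand2 : (k + 3) * W = k * W + 3 * W := by ring
  rw [expand, expand2]
  have h3 : N1 + 2 * N2 ≤ 3 * W := by omega
  have e2 : k * N2 ≤ k * W := Nat.mul_le_mul_left k (by omega)
  exact Nat.add_le_add h3 e2 |>.trans (le_of_eq (by ring))

end AuxMain
section AuxLHS

variable {B G S : Type*} [Fintype B] [Fintype G] [Fintype S]
variable [DecidableEq B] [DecidableEq G] [DecidableEq S]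

lemma lhs_bound {v : B → G → ℕ} (hv : ∀ b g, v b g ≤ 1) (hS1 : 1 ≤ Fintype.card S)
    (τ : S → Finpartition (univ : Finset G)) (σ : B → S) :
    ∑ s : S, ∑ u ∈ (τ s).parts, V1 v (buyersOf σ s) u ≤
      pdem v 1 + (Fintype.card S - 1) * pdem v 2 := by
  set Wt : S → G → ℕ := fun s g => min 1 (∑ b ∈ buyersOf σ s, v b g) with hWt
  have step1 : ∀ s : S, ∀ u ∈ (τ s).parts, V1 v (buyersOf σ s) u ≤ ∑ g ∈ u, Wt s g := by
    intro s u _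
    refine Finset.sup_le fun b hb => ?_
    refine Finset.sum_le_sum fun g _ => ?_
    exact le_min (hv b g)
      (Finset.single_le_sum (f := fun b' => v b' g) (fun b' _ => Nat.zero_le _) hb)
  have step2 : ∑ s : S, ∑ u ∈ (τ s).parts, V1 v (buyersOf σ s) u ≤
      ∑ g : G, ∑ s : S, Wt s g := by
    rw [Finset.sum_comm]
    refine Finset.sum_le_sum fun s _ => ?_
    calc ∑ u ∈ (τ s).parts, V1 v (buyersOf σ s) u ≤ ∑ u ∈ (τ s).parts, ∑ g ∈ u, Wt s g :=
          Finset.sum_le_sum (step1 s)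
      _ = ∑ g : G, Wt s g := Finpartition.sum_parts_sum _ _
  have hd : ∀ g : G, ∑ s : S, ∑ b ∈ buyersOf σ s, v b g = dm v g := by
    intro g
    simp only [buyersOf, Finset.sum_filter]
    rw [Finset.sum_comm]
    simp [Finset.sum_ite_eq, dm]
  have step3 : ∀ g : G, ∑ s : S, Wt s g ≤
      (if 1 ≤ dm v g then 1 else 0) + (Fintype.card S - 1) * (if 2 ≤ dm v g then 1 else 0) := by
    intro g
    have hWd : ∑ s : S, Wt s g ≤ dm v g := by
      rw [← hd g]
      exact Finset.sum_le_sum fun s _ => min_le_right _ _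
    have hW1 : ∑ s : S, Wt s g ≤ Fintype.card S := by
      calc ∑ s : S, Wt s g ≤ ∑ _s : S, 1 := Finset.sum_le_sum fun s _ => min_le_left _ _
        _ = Fintype.card S := by simp
    split_ifs with h1 h2 <;> omega
  have hpd1 : pdem v 1 = ∑ g, (if 1 ≤ dm v g then 1 else 0) := Finset.card_filter _ _
  have hpd2 : pdem v 2 = ∑ g, (if 2 ≤ dm v g then 1 else 0) := Finset.card_filter _ _
  calc ∑ s : S, ∑ u ∈ (τ s).parts, V1 v (buyersOf σ s) u ≤ ∑ g : G, ∑ s : S, Wt s g := step2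
    _ ≤ ∑ g : G, ((if 1 ≤ dm v g then 1 else 0) +
        (Fintype.card S - 1) * (if 2 ≤ dm v g then 1 else 0)) :=
      Finset.sum_le_sum fun g _ => step3 g
    _ = pdem v 1 + (Fintype.card S - 1) * pdem v 2 := by
      rw [Finset.sum_add_distrib, ← Finset.mul_sum, hpd1, hpd2]

end AuxLHS
/-- competition exceeds the welfare of a revenue-maximizing
monopoly by a factor of at most `1 + 1/|S|`. -/
theorem competition_gain_le [Nonempty B] [Nonempty G] [Nonempty S]
    (v : B → G → ℕ) (hv : ∀ b g, v b g ≤ 1)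
    (hB : 2 ≤ Fintype.card B) (hS : 2 ≤ Fintype.card S)
    (πhat : Finpartition (univ : Finset G))
    (hmax : ∀ π' : Finpartition (univ : Finset G), rev1 v π' ≤ rev1 v πhat)
    (τ : S → Finpartition (univ : Finset G)) (σ : B → S) :
    (Fintype.card S : ℚ) * SWm v τ σ ≤ ((Fintype.card S : ℚ) + 1) * SW1 v πhat := by
  classical
  have hG0 : (0:ℚ) < (Fintype.card G : ℚ) := by exact_mod_cast Fintype.card_pos
  have hS0 : (0:ℚ) < (Fintype.card S : ℚ) := by exact_mod_cast Fintype.card_pos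
  -- extract the revenue-maximality against the comparison partition, in `ℕ`
  have hrevN : ∑ u ∈ (compPart v πhat).parts, V2 v (univ : Finset B) u ≤
      ∑ t ∈ πhat.parts, V2 v (univ : Finset B) t := by
    have h := hmax (compPart v πhat)
    rw [rev1, rev1] at h
    have h' := (mul_le_mul_iff_right₀ (inv_pos.mpr hG0)).mp h
    exact_mod_cast h'
  set k := Fintype.card S - 2 with hk
  have hcardS : Fintype.card S = k + 2 := by omega
  have hmainN := main_nat hv πhat hrevN k
  have hlhsN := lhs_bound (S := S) hv (by omega) τ σ
  have hN : ∑ s : S, ∑ u ∈ (τ s).parts, V1 v (buyersOf σ s) u ≤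
      (Fintype.card S + 1) * ∑ t ∈ πhat.parts, V1 v (univ : Finset B) t := by
    calc ∑ s : S, ∑ u ∈ (τ s).parts, V1 v (buyersOf σ s) u
        ≤ pdem v 1 + (Fintype.card S - 1) * pdem v 2 := hlhsN
      _ = pdem v 1 + (k + 1) * pdem v 2 := by
          have : Fintype.card S - 1 = k + 1 := by omega
          rw [this]
      _ ≤ (k + 3) * ∑ t ∈ πhat.parts, V1 v (univ : Finset B) t := hmainN
      _ = (Fintype.card S + 1) * ∑ t ∈ πhat.parts, V1 v (univ : Finset B) t := by
          rw [hcardS]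
  -- pass to `ℚ`
  have hXle : (∑ s : S, ∑ u ∈ (τ s).parts, (V1 v (buyersOf σ s) u : ℚ)) ≤
      ((Fintype.card S : ℚ) + 1) * ∑ t ∈ πhat.parts, (V1 v (univ : Finset B) t : ℚ) := by
    exact_mod_cast hN
  rw [SWm, SW1]
  calc (Fintype.card S : ℚ) *
        (((Fintype.card S : ℚ) * (Fintype.card G : ℚ))⁻¹ *
          ∑ s : S, ∑ u ∈ (τ s).parts, (V1 v (buyersOf σ s) u : ℚ))
      = ((Fintype.card S : ℚ) * (Fintype.card S : ℚ)⁻¹) *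
        ((Fintype.card G : ℚ)⁻¹ * ∑ s : S, ∑ u ∈ (τ s).parts, (V1 v (buyersOf σ s) u : ℚ)) := by
        rw [mul_inv]; ring
    _ = (Fintype.card G : ℚ)⁻¹ * ∑ s : S, ∑ u ∈ (τ s).parts, (V1 v (buyersOf σ s) u : ℚ) := by
        rw [mul_inv_cancel₀ (ne_of_gt hS0), one_mul]
    _ ≤ (Fintype.card G : ℚ)⁻¹ *
        (((Fintype.card S : ℚ) + 1) * ∑ t ∈ πhat.parts, (V1 v (univ : Finset B) t : ℚ)) :=
        mul_le_mul_of_nonneg_left hXle (inv_nonneg.mpr hG0.le)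
    _ = ((Fintype.card S : ℚ) + 1) *
        ((Fintype.card G : ℚ)⁻¹ * ∑ t ∈ πhat.parts, (V1 v (univ : Finset B) t : ℚ)) := by
        ring
end

section
/- The factor 1 + 1/|S| is tight: for every integer k ≥ 2 there exist a buyer set B with |B| = k+1, a good set G with |G| = 2, binary valuations v, a revenue-maximizing single-seller partition π̂, and, in the game with a seller set S of size k, a pure subgame perfect equilibrium (π, f) such that k·SW(π, f(π)) = (k+1)·SW(π̂) and SW(π̂) = 1/2. -/
open Finset

variable {B G S : Type*} [Fintype B] [Fintype G] [Fintype S]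
variable [DecidableEq B] [DecidableEq G] [DecidableEq S]

namespace TightAux

/-- classification of nonempty subsets of `Fin 2` -/
lemma fin2_subsets : ∀ t : Finset (Fin 2), t.Nonempty →
    t = {0} ∨ t = {1} ∨ t = univ := by decide

lemma pair_ne_single : ({0} : Finset (Fin 2)) ≠ {1} := by decide

lemma classify (π : Finpartition (univ : Finset (Fin 2))) :
    π.parts = {univ} ∨ π.parts = {{0}, {1}} := by
  by_cases h : (univ : Finset (Fin 2)) ∈ π.parts
  · left
    refine Finset.eq_singleton_iff_unique_mem.2 ⟨h, fun t ht => ?_⟩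
    obtain ⟨a, hat⟩ := π.nonempty_of_mem_parts ht
    exact π.eq_of_mem_parts ht h hat (mem_univ a)
  · right
    have h0 : ({0} : Finset (Fin 2)) ∈ π.parts := by
      obtain ⟨t, htp, h0t⟩ := π.exists_mem (mem_univ (0 : Fin 2))
      rcases fin2_subsets t ⟨0, h0t⟩ with rfl | rfl | rfl
      · exact htp
      · exact absurd h0t (by decide)
      · exact absurd htp h
    have h1 : ({1} : Finset (Fin 2)) ∈ π.parts := by
      obtain ⟨t, htp, h1t⟩ := π.exists_mem (mem_univ (1 : Fin 2))
      rcases fin2_subsets t ⟨1, h1t⟩ with rfl | rfl | rfl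
      · exact absurd h1t (by decide)
      · exact htp
      · exact absurd htp h
    refine Finset.Subset.antisymm (fun t htp => ?_) (fun t htm => ?_)
    · rcases fin2_subsets t (π.nonempty_of_mem_parts htp) with rfl | rfl | rfl
      · simp
      · simp
      · exact absurd htp h
    · simp only [mem_insert, mem_singleton] at htm
      rcases htm with rfl | rfl
      · exact h0
      · exact h1

lemma triv_ne_disc : ({univ} : Finset (Finset (Fin 2))) ≠ {{0}, {1}} := by decide

/-- The discrete partition of `Fin 2`. -/
def discPart : Finpartition (univ : Finset (Fin 2)) where
  parts := {{0}, {1}}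
  supIndep := (Finset.supIndep_pair pair_ne_single).2 (by decide)
  sup_parts := by decide
  bot_notMem := by decide

lemma discPart_parts : discPart.parts = {{0}, {1}} := rfl

lemma trivPart_parts : (trivPart (Fin 2)).parts = {univ} := rfl

/-- the valuations -/
def myv (k : ℕ) (b : Fin (k + 1)) (g : Fin 2) : ℕ :=
  if b.1 < k then (if g = 0 then 1 else 0) else (if g = 1 then 1 else 0)

variable {k : ℕ}

lemma myv_le_one (b : Fin (k + 1)) (g : Fin 2) : myv k b g ≤ 1 := by
  unfold myv; split <;> split <;> omega

lemma vsum_zero (b : Fin (k + 1)) :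
    vsum (myv k) b {0} = if b.1 < k then 1 else 0 := by
  rw [vsum, Finset.sum_singleton, myv]
  split
  · decide
  · decide

lemma vsum_one (b : Fin (k + 1)) :
    vsum (myv k) b {1} = if b.1 < k then 0 else 1 := by
  rw [vsum, Finset.sum_singleton, myv]
  split
  · decide
  · decide

lemma vsum_univ (b : Fin (k + 1)) : vsum (myv k) b univ = 1 := by
  rw [vsum, Fin.sum_univ_two, myv, myv]
  split <;> decide

lemma V1_univ (Bb : Finset (Fin (k + 1))) :
    V1 (myv k) Bb univ = if Bb.Nonempty then 1 else 0 := by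
  rw [V1]
  split
  · next h =>
    obtain ⟨b, hb⟩ := h
    refine le_antisymm (Finset.sup_le fun c _ => (vsum_univ c).le) ?_
    exact le_trans (le_of_eq (vsum_univ b).symm) (Finset.le_sup (f := fun c => vsum (myv k) c univ) hb)
  · next h =>
    rw [Finset.not_nonempty_iff_eq_empty] at h
    subst h; rfl

lemma V1_one (Bb : Finset (Fin (k + 1))) :
    V1 (myv k) Bb {1} = if Fin.last k ∈ Bb then 1 else 0 := by
  rw [V1]
  split
  · next h =>
    refine le_antisymm (Finset.sup_le fun c _ => ?_) ?_
    · rw [vsum_one]; split <;> omega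
    · refine le_trans ?_ (Finset.le_sup (f := fun b => vsum (myv k) b {1}) h)
      show 1 ≤ vsum (myv k) (Fin.last k) {1}
      rw [vsum_one, if_neg (by simp [Fin.val_last])]
  · next h =>
    refine Nat.le_antisymm (Finset.sup_le fun b hb => ?_) (Nat.zero_le _)
    have hne : b ≠ Fin.last k := fun e => h (e ▸ hb)
    have hlt : b.1 < k := by
      rcases Nat.lt_or_ge b.1 k with h2 | h2
      · exact h2
      · exfalso
        refine hne (Fin.ext ?_)
        rw [Fin.val_last]
        have h1 := b.isLt
        omega
    rw [vsum_one, if_pos hlt]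

lemma V2_singleton {B G : Type*} [DecidableEq B] [DecidableEq G]
    (v : B → G → ℕ) (a : B) (Gb : Finset G) : V2 v {a} Gb = 0 := by
  rw [V2, dif_pos (Finset.singleton_nonempty a), Finset.inf'_singleton,
    Finset.erase_singleton, V1, Finset.sup_empty]
  rfl

lemma V2_pair {B G : Type*} [DecidableEq B] [DecidableEq G]
    (v : B → G → ℕ) (a c : B) (hac : a ≠ c) (Gb : Finset G) :
    V2 v {a, c} Gb = min (vsum v a Gb) (vsum v c Gb) := by
  have e1 : ({a, c} : Finset B).erase a = {c} := by
    rw [show ({a, c} : Finset B) = insert a {c} from rfl,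
      Finset.erase_insert (by simp [hac])]
  have e2 : ({a, c} : Finset B).erase c = {a} := by
    rw [Finset.pair_comm, show ({c, a} : Finset B) = insert c {a} from rfl,
      Finset.erase_insert (by simp [hac.symm])]
  rw [V2, dif_pos ⟨a, by simp⟩]
  refine le_antisymm (le_min ?_ ?_) (Finset.le_inf' _ _ ?_)
  · refine le_trans (Finset.inf'_le _ (by simp : c ∈ ({a, c} : Finset B))) ?_
    show V1 v (({a, c} : Finset B).erase c) Gb ≤ _
    rw [e2, V1, Finset.sup_singleton]
  · refine le_trans (Finset.inf'_le _ (by simp : a ∈ ({a, c} : Finset B))) ?_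
    show V1 v (({a, c} : Finset B).erase a) Gb ≤ _
    rw [e1, V1, Finset.sup_singleton]
  · intro b hb
    rcases Finset.mem_insert.mp hb with rfl | hb
    · show _ ≤ V1 v (({b, c} : Finset B).erase b) Gb
      rw [e1, V1, Finset.sup_singleton]
      exact min_le_right _ _
    · rw [Finset.mem_singleton] at hb
      subst hb
      show _ ≤ V1 v (({a, b} : Finset B).erase b) Gb
      rw [e2, V1, Finset.sup_singleton]
      exact min_le_left _ _

lemma V2_univG (Bb : Finset (Fin (k + 1))) :
    V2 (myv k) Bb univ = if 2 ≤ Bb.card then 1 else 0 := by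
  rw [V2]
  split
  · next h =>
    by_cases h2 : 2 ≤ Bb.card
    · rw [if_pos h2]
      obtain ⟨b, hb⟩ := h
      refine le_antisymm ((Finset.inf'_le _ hb).trans ?_) (Finset.le_inf' _ _ fun c hc => ?_)
      · rw [V1_univ]; split <;> omega
      · rw [V1_univ, if_pos ?_]
        rw [← Finset.card_pos, Finset.card_erase_of_mem hc]; omega
    · rw [if_neg h2]
      have hc1 : Bb.card = 1 := by
        have := Finset.card_pos.2 h; omega
      obtain ⟨a, rfl⟩ := Finset.card_eq_one.mp hc1
      rw [Finset.inf'_singleton, Finset.erase_singleton, V1, Finset.sup_empty]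
      rfl
  · next h =>
    rw [Finset.not_nonempty_iff_eq_empty] at h
    subst h; simp

lemma V2_one (Bb : Finset (Fin (k + 1))) : V2 (myv k) Bb {1} = 0 := by
  rw [V2]
  split
  · next h =>
    refine Nat.le_antisymm ?_ (Nat.zero_le _)
    by_cases hl : Fin.last k ∈ Bb
    · refine (Finset.inf'_le _ hl).trans ?_
      rw [V1_one, if_neg (Finset.notMem_erase _ _)]
    · obtain ⟨b, hb⟩ := h
      refine (Finset.inf'_le _ hb).trans ?_
      rw [V1_one, if_neg (fun hme => hl (Finset.mem_of_mem_erase hme))]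
  · rfl

lemma V2_zero_le_one (Bb : Finset (Fin (k + 1))) : V2 (myv k) Bb {0} ≤ 1 := by
  rw [V2]
  split
  · next h =>
    obtain ⟨b, hb⟩ := h
    refine (Finset.inf'_le _ hb).trans (Finset.sup_le fun c _ => ?_)
    rw [vsum_zero]; split <;> omega
  · omega

/-- the buyer assignment given the chosen host `t` for the special buyer -/
def fA (k : ℕ) (t : Fin k) (b : Fin (k + 1)) : Fin k :=
  if h : b.1 < k then ⟨b.1, h⟩ else t

lemma fA_eq_iff (t s : Fin k) (b : Fin (k + 1)) :
    fA k t b = s ↔ (b.1 = s.1 ∨ (b.1 = k ∧ t = s)) := by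
  rw [fA]
  split
  · next hb =>
    constructor
    · intro e; exact Or.inl (congrArg Fin.val e)
    · rintro (e | ⟨e, rfl⟩)
      · exact Fin.ext e
      · omega
  · next hb =>
    have hbk : b.1 = k := by have := b.isLt; omega
    constructor
    · intro e; exact Or.inr ⟨hbk, e⟩
    · rintro (e | ⟨_, e⟩)
      · exfalso; have := s.isLt; omega
      · exact e

lemma emb_ne_last (s : Fin k) : Fin.castSucc s ≠ Fin.last k :=
  (Fin.castSucc_lt_last s).ne

lemma fA_emb (t s : Fin k) : fA k t (Fin.castSucc s) = s := by
  rw [fA_eq_iff]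
  exact Or.inl rfl

lemma buyersOf_fA_eq (t s : Fin k) (h : t = s) :
    buyersOf (fA k t) s = {Fin.castSucc s, Fin.last k} := by
  subst h
  ext b
  simp only [buyersOf, mem_filter, mem_univ, true_and, fA_eq_iff, mem_insert,
    mem_singleton]
  constructor
  · rintro (e | ⟨e, -⟩)
    · exact Or.inl (Fin.ext (by rw [Fin.coe_castSucc]; exact e))
    · exact Or.inr (Fin.ext (by rw [Fin.val_last]; exact e))
  · rintro (rfl | rfl)
    · exact Or.inl (Fin.coe_castSucc t)
    · exact Or.inr ⟨Fin.val_last k, trivial⟩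

lemma buyersOf_fA_ne (t s : Fin k) (h : t ≠ s) :
    buyersOf (fA k t) s = {Fin.castSucc s} := by
  ext b
  simp only [buyersOf, mem_filter, mem_univ, true_and, fA_eq_iff, mem_singleton]
  constructor
  · rintro (e | ⟨-, e⟩)
    · exact Fin.ext (by rw [Fin.coe_castSucc]; exact e)
    · exact absurd e h
  · rintro rfl
    exact Or.inl (Fin.coe_castSucc s)

/-- choice of a seller with a non-trivial partition, if any -/
noncomputable def tsel (hk : 0 < k) (τ : Fin k → Finpartition (univ : Finset (Fin 2))) : Fin k :=
  if h : ∃ s, (τ s).parts ≠ {univ} then h.choose else ⟨0, hk⟩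

lemma tsel_disc (hk : 0 < k) (τ : Fin k → Finpartition (univ : Finset (Fin 2)))
    (h : ∃ s, (τ s).parts ≠ {univ}) : (τ (tsel hk τ)).parts = {{0}, {1}} := by
  rw [tsel, dif_pos h]
  rcases classify (τ h.choose) with hc | hc
  · exact absurd hc h.choose_spec
  · exact hc

lemma card_fin2 : (Fintype.card (Fin 2) : ℚ) = 2 := by simp

lemma ubuyer_triv (v : Fin (k + 1) → Fin 2 → ℕ)
    (τ : Fin k → Finpartition (univ : Finset (Fin 2))) (σ : Fin (k + 1) → Fin k)
    (b : Fin (k + 1)) (h : (τ (σ b)).parts = {univ}) :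
    ubuyer v τ σ b =
      2⁻¹ * max ((vsum v b univ : ℚ) - (V2 v (buyersOf σ (σ b)) univ : ℚ)) 0 := by
  rw [ubuyer, h, Finset.sum_singleton, card_fin2]

lemma ubuyer_disc (v : Fin (k + 1) → Fin 2 → ℕ)
    (τ : Fin k → Finpartition (univ : Finset (Fin 2))) (σ : Fin (k + 1) → Fin k)
    (b : Fin (k + 1)) (h : (τ (σ b)).parts = {{0}, {1}}) :
    ubuyer v τ σ b =
      2⁻¹ * (max ((vsum v b {0} : ℚ) - (V2 v (buyersOf σ (σ b)) {0} : ℚ)) 0 +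
        max ((vsum v b {1} : ℚ) - (V2 v (buyersOf σ (σ b)) {1} : ℚ)) 0) := by
  rw [ubuyer, h, Finset.sum_pair pair_ne_single, card_fin2]

lemma ubuyer_nonneg (v : Fin (k + 1) → Fin 2 → ℕ)
    (τ : Fin k → Finpartition (univ : Finset (Fin 2))) (σ : Fin (k + 1) → Fin k)
    (b : Fin (k + 1)) : 0 ≤ ubuyer v τ σ b := by
  rw [ubuyer]
  refine mul_nonneg (by positivity) (Finset.sum_nonneg fun Gb _ => le_max_right _ _)

lemma ubuyer_le_half (τ : Fin k → Finpartition (univ : Finset (Fin 2)))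
    (σ : Fin (k + 1) → Fin k) (b : Fin (k + 1)) :
    ubuyer (myv k) τ σ b ≤ 1 / 2 := by
  rcases classify (τ (σ b)) with h | h
  · rw [ubuyer_triv _ _ _ _ h, vsum_univ]
    have h0 : (0 : ℚ) ≤ (V2 (myv k) (buyersOf σ (σ b)) univ : ℚ) := Nat.cast_nonneg _
    have hm : max (((1 : ℕ) : ℚ) - (V2 (myv k) (buyersOf σ (σ b)) univ : ℚ)) 0 ≤ 1 :=
      max_le (by push_cast; linarith) (by norm_num)
    refine le_trans (mul_le_mul_of_nonneg_left hm (by norm_num : (0:ℚ) ≤ 2⁻¹)) (by norm_num)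
  · rw [ubuyer_disc _ _ _ _ h]
    have h0 : max ((vsum (myv k) b {0} : ℚ) - (V2 (myv k) (buyersOf σ (σ b)) {0} : ℚ)) 0 ≤
        (vsum (myv k) b {0} : ℚ) :=
      max_le (by have : (0:ℚ) ≤ (V2 (myv k) (buyersOf σ (σ b)) {0} : ℚ) := Nat.cast_nonneg _
                 linarith) (Nat.cast_nonneg _)
    have h1 : max ((vsum (myv k) b {1} : ℚ) - (V2 (myv k) (buyersOf σ (σ b)) {1} : ℚ)) 0 ≤
        (vsum (myv k) b {1} : ℚ) :=
      max_le (by have : (0:ℚ) ≤ (V2 (myv k) (buyersOf σ (σ b)) {1} : ℚ) := Nat.cast_nonneg _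
                 linarith) (Nat.cast_nonneg _)
    have hs : (vsum (myv k) b {0} : ℚ) + (vsum (myv k) b {1} : ℚ) = 1 := by
      rw [vsum_zero, vsum_one]
      split <;> norm_num
    linarith

lemma useller_zero (τ : Fin k → Finpartition (univ : Finset (Fin 2))) (t s : Fin k)
    (h : t = s → (τ s).parts = {{0}, {1}}) :
    useller (myv k) τ (fA k t) s = 0 := by
  rw [useller]
  rw [show ∑ Gb ∈ (τ s).parts, ((V2 (myv k) (buyersOf (fA k t) s) Gb : ℚ)) = 0 from ?_,
    mul_zero]
  by_cases hts : t = s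
  · rw [h hts, Finset.sum_pair pair_ne_single, buyersOf_fA_eq _ _ hts,
      V2_pair _ _ _ (emb_ne_last s), V2_pair _ _ _ (emb_ne_last s),
      vsum_zero, vsum_zero, vsum_one, vsum_one]
    have hcs : (Fin.castSucc s).1 < k := s.isLt
    have hls : ¬ (Fin.last k).1 < k := by simp [Fin.val_last]
    rw [if_pos hcs, if_pos hcs, if_neg hls, if_neg hls]
    norm_num
  · rw [buyersOf_fA_ne _ _ hts]
    refine Finset.sum_eq_zero fun Gb _ => by rw [V2_singleton]; norm_num

end TightAux

open TightAux in
/-- the factor `1 + 1/|S|` is tight. -/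
theorem competition_gain_tight (k : ℕ) (hk : 2 ≤ k) :
    ∃ v : Fin (k + 1) → Fin 2 → ℕ,
      (∀ b g, v b g ≤ 1) ∧
      ∃ πhat : Finpartition (univ : Finset (Fin 2)),
        (∀ π' : Finpartition (univ : Finset (Fin 2)), rev1 v π' ≤ rev1 v πhat) ∧
        ∃ (π : Fin k → Finpartition (univ : Finset (Fin 2)))
          (f : (Fin k → Finpartition (univ : Finset (Fin 2))) → (Fin (k + 1) → Fin k)),
          IsSPE v π f ∧
          (k : ℚ) * SWm v π (f π) = ((k : ℚ) + 1) * SW1 v πhat ∧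
          SW1 v πhat = 1 / 2 := by
  have hk0 : 0 < k := by omega
  have hnB : (univ : Finset (Fin (k + 1))).Nonempty := ⟨0, mem_univ _⟩
  refine ⟨myv k, fun b g => myv_le_one b g, trivPart (Fin 2), ?_, ?_⟩
  · -- revenue maximality of the trivial partition
    intro π'
    have hhat : rev1 (myv k) (trivPart (Fin 2)) = 1 / 2 := by
      rw [rev1, trivPart_parts, Finset.sum_singleton, card_fin2, V2_univG]
      rw [if_pos (by rw [Finset.card_univ, Fintype.card_fin]; omega)]
      norm_num
    rw [hhat]
    rcases classify π' with h | h
    · rw [rev1, h, Finset.sum_singleton, card_fin2, V2_univG,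
        if_pos (by rw [Finset.card_univ, Fintype.card_fin]; omega)]
      norm_num
    · rw [rev1, h, Finset.sum_pair pair_ne_single, card_fin2, V2_one]
      have hle : (V2 (myv k) (univ : Finset (Fin (k + 1))) {0} : ℚ) ≤ 1 := by
        exact_mod_cast V2_zero_le_one (univ : Finset (Fin (k + 1)))
      push_cast
      linarith
  · refine ⟨fun _ => discPart, fun τ => fA k (tsel hk0 τ), ⟨?_, ?_⟩, ?_, ?_⟩
    · -- Nash in every subgame
      intro τ b s'
      set t := tsel hk0 τ with ht
      by_cases hd : ∃ s0, (τ s0).parts ≠ {univ}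
      · -- some seller discloses: everyone gets 1/2
        have htd : (τ t).parts = {{0}, {1}} := tsel_disc hk0 τ hd
        have hval : ubuyer (myv k) τ (fA k t) b = 1 / 2 := by
          by_cases hb : b.1 < k
          · have hσ : fA k t b = ⟨b.1, hb⟩ := dif_pos hb
            set s : Fin k := ⟨b.1, hb⟩ with hs
            have hbemb : Fin.castSucc s = b := Fin.ext rfl
            rcases classify (τ s) with hp | hp
            · -- b's seller is trivial, hence b is alone there
              have hts : t ≠ s := by
                intro e
                rw [e] at htd
                exact triv_ne_disc (hp.symm.trans htd)
              have hB : buyersOf (fA k t) s = {b} := by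
                rw [buyersOf_fA_ne _ _ hts, hbemb]
              rw [ubuyer_triv _ _ _ _ (by rw [hσ]; exact hp), hσ, hB, V2_singleton,
                vsum_univ]
              norm_num
            · -- b's seller discloses
              have hV2 : V2 (myv k) (buyersOf (fA k t) s) {0} = 0 := by
                have h1 : (Fin.castSucc s).1 < k := s.isLt
                have h2 : ¬ (Fin.last k).1 < k := by simp [Fin.val_last]
                by_cases hts : t = s
                · rw [buyersOf_fA_eq _ _ hts, V2_pair _ _ _ (emb_ne_last s),
                    vsum_zero, vsum_zero, if_pos h1, if_neg h2]
                  decide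
                · rw [buyersOf_fA_ne _ _ hts, V2_singleton]
              rw [ubuyer_disc _ _ _ _ (by rw [hσ]; exact hp), hσ, hV2, V2_one,
                vsum_zero, vsum_one, if_pos hb, if_pos hb]
              norm_num
          · -- b is the special buyer, assigned to the disclosing seller t
            have hσ : fA k t b = t := dif_neg hb
            have hB : buyersOf (fA k t) t = {Fin.castSucc t, Fin.last k} :=
              buyersOf_fA_eq t t rfl
            have hV2 : V2 (myv k) (buyersOf (fA k t) t) {0} = 0 := by
              have h1 : (Fin.castSucc t).1 < k := t.isLt
              have h2 : ¬ (Fin.last k).1 < k := by simp [Fin.val_last]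
              rw [hB, V2_pair _ _ _ (emb_ne_last t), vsum_zero, vsum_zero,
                if_pos h1, if_neg h2]
              decide
            rw [ubuyer_disc _ _ _ _ (by rw [hσ]; exact htd), hσ, hV2, V2_one,
              vsum_zero, vsum_one, if_neg hb, if_neg hb]
            norm_num
        rw [hval]
        exact ubuyer_le_half τ _ b
      · -- all sellers are trivial
        push_neg at hd
        have hall : ∀ s0, (τ s0).parts = {univ} := hd
        by_cases he : s' = fA k t b
        · rw [he, Function.update_eq_self]
        · set σ' := Function.update (fA k t) b s' with hσ'
          have hσ'b : σ' b = s' := Function.update_self _ _ _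
          have hemb : σ' (Fin.castSucc s') = s' := by
            have hne : Fin.castSucc s' ≠ b := by
              intro e
              exact he (by rw [← e, fA_emb])
            rw [hσ', Function.update_of_ne hne, fA_emb]
          have hcard : 2 ≤ (buyersOf σ' s').card := by
            refine Finset.one_lt_card.mpr ⟨b, ?_, Fin.castSucc s', ?_, ?_⟩
            · simp [buyersOf, hσ'b]
            · simp [buyersOf, hemb]
            · intro e
              exact he (by rw [e, fA_emb])
          have : ubuyer (myv k) τ σ' b = 0 := by
            rw [ubuyer_triv _ _ _ _ (by rw [hσ'b]; exact hall s'), hσ'b, V2_univG,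
              if_pos hcard, vsum_univ]
            norm_num
          rw [this]
          exact ubuyer_nonneg _ _ _ _
    · -- no profitable seller deviation
      intro s ρ
      have hRHS : useller (myv k) (fun _ => discPart) (fA k (tsel hk0 fun _ => discPart)) s
          = 0 := useller_zero _ _ _ (fun _ => discPart_parts)
      have hLHS : useller (myv k) (Function.update (fun _ => discPart) s ρ)
          (fA k (tsel hk0 (Function.update (fun _ => discPart) s ρ))) s = 0 := by
        set π' := Function.update (fun _ : Fin k => discPart) s ρ with hπ'
        refine useller_zero _ _ _ (fun hts => ?_)
        have hex : ∃ s0, (π' s0).parts ≠ {univ} := by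
          have hnt : Nontrivial (Fin k) :=
            ⟨⟨⟨0, hk0⟩, ⟨1, by omega⟩, by simp [Fin.ext_iff]⟩⟩
          obtain ⟨s0, hs0⟩ : ∃ s0 : Fin k, s0 ≠ s := exists_ne s
          refine ⟨s0, ?_⟩
          rw [hπ', Function.update_of_ne hs0]
          exact fun e => triv_ne_disc (e.symm.trans discPart_parts)
        have := tsel_disc hk0 π' hex
        rwa [hts] at this
      rw [hRHS, hLHS]
    · -- welfare identity
      have hSWm : SWm (myv k) (fun _ => discPart)
          (fA k (tsel hk0 fun _ => discPart)) = ((k : ℚ) + 1) / (2 * k) := by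
        set t0 := tsel hk0 (fun _ : Fin k => discPart) with ht0
        rw [SWm]
        have hsum : ∀ s : Fin k,
            ∑ Gb ∈ discPart.parts, (V1 (myv k) (buyersOf (fA k t0) s) Gb : ℚ) =
              1 + if t0 = s then 1 else 0 := by
          intro s
          rw [discPart_parts, Finset.sum_pair pair_ne_single]
          have h1 : (Fin.castSucc s).1 < k := s.isLt
          have h2 : ¬ (Fin.last k).1 < k := by simp [Fin.val_last]
          by_cases hts : t0 = s
          · rw [buyersOf_fA_eq _ _ hts, if_pos hts]
            rw [V1, V1, show ({Fin.castSucc s, Fin.last k} : Finset (Fin (k+1)))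
              = insert (Fin.castSucc s) {Fin.last k} from rfl,
              Finset.sup_insert, Finset.sup_insert, Finset.sup_singleton,
              Finset.sup_singleton, vsum_zero, vsum_zero, vsum_one, vsum_one,
              if_pos h1, if_pos h1, if_neg h2, if_neg h2,
              show ((1 : ℕ) ⊔ 0) = 1 by decide, show ((0 : ℕ) ⊔ 1) = 1 by decide]
            norm_num
          · rw [buyersOf_fA_ne _ _ hts, if_neg hts]
            rw [V1, V1, Finset.sup_singleton, Finset.sup_singleton, vsum_zero, vsum_one,
              if_pos h1, if_pos h1]
            norm_num
        rw [Finset.sum_congr rfl (fun s _ => hsum s), Finset.sum_add_distrib,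
          Finset.sum_const, Finset.sum_ite_eq univ t0 (fun _ => (1 : ℚ)),
          if_pos (mem_univ t0), card_fin2, Finset.card_univ, Fintype.card_fin]
        have hkne : (k : ℚ) ≠ 0 := Nat.cast_ne_zero.mpr hk0.ne'
        rw [nsmul_eq_mul, mul_one, inv_mul_eq_div,
          div_eq_div_iff (mul_ne_zero hkne two_ne_zero) (mul_ne_zero two_ne_zero hkne)]
        ring
      have hSW1 : SW1 (myv k) (trivPart (Fin 2)) = 1 / 2 := by
        rw [SW1, trivPart_parts, Finset.sum_singleton, card_fin2, V1_univ,
          if_pos hnB]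
        norm_num
      rw [hSWm, hSW1]
      have hkne : (k : ℚ) ≠ 0 := Nat.cast_ne_zero.mpr hk0.ne'
      field_simp
    · rw [SW1, trivPart_parts, Finset.sum_singleton, card_fin2, V1_univ, if_pos hnB]
      norm_num
end

section
/- Suppose |S| ≥ 2, |B| ≥ |S|, and every buyer has positive demand, i.e. v_b(G) ≥ 1 for every b ∈ B. Then for every seller profile τ and every buyer assignment σ that is a Nash equilibrium for τ, SW(τ,σ) ≥ 1/|G|. -/
open Finset

variable {B G S : Type*} [Fintype B] [Fintype G] [Fintype S]
variable [DecidableEq B] [DecidableEq G] [DecidableEq S]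

set_option linter.unusedSectionVars false

lemma vsum_parts (v : B → G → ℕ) (π : Finpartition (univ : Finset G)) (b : B) :
    ∑ Gb ∈ π.parts, vsum v b Gb = vsum v b univ := by
  unfold vsum
  have h1 : (univ : Finset G) = π.parts.biUnion id := by
    rw [← Finset.sup_eq_biUnion, π.sup_parts]
  rw [Finset.sum_congr h1 (fun _ _ => rfl), Finset.sum_biUnion π.supIndep.pairwiseDisjoint]
  rfl

lemma V2_singleton (v : B → G → ℕ) (b : B) (Gb : Finset G) : V2 v {b} Gb = 0 := by
  simp [V2, V1]

lemma V2_eq_zero_cases {v : B → G → ℕ} {Bb : Finset B} {Gb : Finset G}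
    (hne : Bb.Nonempty) (h : V2 v Bb Gb = 0) :
    ∃ b0 ∈ Bb, ∀ b ∈ Bb.erase b0, vsum v b Gb = 0 := by
  rw [V2, dif_pos hne] at h
  obtain ⟨b0, hb0, heq⟩ := Finset.exists_mem_eq_inf' hne (fun b => V1 v (Bb.erase b) Gb)
  refine ⟨b0, hb0, fun b hb => ?_⟩
  have : V1 v (Bb.erase b0) Gb = 0 := by rw [← heq]; exact h
  have h2 := (Finset.sup_eq_bot_iff (fun b => vsum v b Gb) (Bb.erase b0)).mp this b hb
  simpa using h2

lemma sum_vsum_le_V1 {v : B → G → ℕ} {Bb : Finset B} {Gb : Finset G}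
    (h : (∃ b ∈ Bb, 0 < vsum v b Gb) → V2 v Bb Gb = 0) :
    ∑ b ∈ Bb, vsum v b Gb ≤ V1 v Bb Gb := by
  by_cases hz : ∃ b ∈ Bb, 0 < vsum v b Gb
  · have hz2 := h hz
    obtain ⟨b1, hb1, _⟩ := hz
    obtain ⟨b0, hb0, hall⟩ := V2_eq_zero_cases ⟨b1, hb1⟩ hz2
    rw [← Finset.add_sum_erase _ _ hb0, Finset.sum_eq_zero hall, add_zero]
    exact Finset.le_sup (f := fun b => vsum v b Gb) hb0
  · push_neg at hz
    have h3 : ∑ b ∈ Bb, vsum v b Gb = 0 :=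
      Finset.sum_eq_zero (fun b hb => Nat.le_zero.mp (hz b hb))
    simp [h3]

lemma V2_zero_of_pos [Nonempty G]
    {v : B → G → ℕ} {τ : S → Finpartition (univ : Finset G)} {σ : B → S}
    (hσ : IsNash v τ σ) {s0 : S} (hs0 : buyersOf σ s0 = ∅) (b : B)
    {Gb : Finset G} (hGb : Gb ∈ (τ (σ b)).parts) (hpos : 0 < vsum v b Gb) :
    V2 v (buyersOf σ (σ b)) Gb = 0 := by
  have hGpos : (0:ℚ) < (Fintype.card G : ℚ) := by
    exact_mod_cast Fintype.card_pos
  have hbmem : b ∈ buyersOf σ (σ b) := by simp [buyersOf]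
  have hbs0 : σ b ≠ s0 := by
    intro h; rw [h] at hbmem; rw [hs0] at hbmem; exact absurd hbmem (Finset.notMem_empty b)
  set σ' := Function.update σ b s0 with hσ'
  have hσ'b : σ' b = s0 := Function.update_self b s0 σ
  have hbuy : buyersOf σ' s0 = {b} := by
    ext b'
    simp only [buyersOf, Finset.mem_filter, Finset.mem_univ, true_and, Finset.mem_singleton]
    constructor
    · intro h
      by_contra hne
      rw [hσ', Function.update_of_ne hne] at h
      have : b' ∈ buyersOf σ s0 := by simp [buyersOf, h]
      rw [hs0] at this; exact absurd this (Finset.notMem_empty b')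
    · intro h; subst h; exact hσ'b
  have hdev : ubuyer v τ σ' b = (Fintype.card G : ℚ)⁻¹ * (vsum v b univ : ℚ) := by
    unfold ubuyer
    rw [hσ'b, hbuy]
    congr 1
    rw [show ((vsum v b univ : ℚ)) = ∑ Gb ∈ (τ s0).parts, (vsum v b Gb : ℚ) by
      rw [← Nat.cast_sum]; exact_mod_cast (vsum_parts v (τ s0) b).symm]
    refine Finset.sum_congr rfl (fun Gb _ => ?_)
    rw [V2_singleton]
    simp
  have hub : ubuyer v τ σ b ≤ (Fintype.card G : ℚ)⁻¹ *
      ∑ Gb ∈ (τ (σ b)).parts, (vsum v b Gb : ℚ) := by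
    unfold ubuyer
    refine mul_le_mul_of_nonneg_left (Finset.sum_le_sum fun Gb _ => ?_) (by positivity)
    refine max_le ?_ (by positivity)
    have : (0:ℚ) ≤ (V2 v (buyersOf σ (σ b)) Gb : ℚ) := by positivity
    linarith
  have hnash := hσ b s0
  rw [hdev] at hnash
  have hsum : ∑ Gb ∈ (τ (σ b)).parts, (vsum v b Gb : ℚ) ≤
      ∑ Gb ∈ (τ (σ b)).parts, max ((vsum v b Gb : ℚ) - (V2 v (buyersOf σ (σ b)) Gb : ℚ)) 0 := by
    have htot : (vsum v b univ : ℚ) = ∑ Gb ∈ (τ (σ b)).parts, (vsum v b Gb : ℚ) := by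
      rw [← Nat.cast_sum]; exact_mod_cast (vsum_parts v (τ (σ b)) b).symm
    unfold ubuyer at hnash
    rw [htot] at hnash
    exact le_of_mul_le_mul_left hnash (by positivity)
  have hle : ∀ Gb ∈ (τ (σ b)).parts,
      max ((vsum v b Gb : ℚ) - (V2 v (buyersOf σ (σ b)) Gb : ℚ)) 0 ≤ (vsum v b Gb : ℚ) := by
    intro Gb _
    refine max_le ?_ (by positivity)
    have : (0:ℚ) ≤ (V2 v (buyersOf σ (σ b)) Gb : ℚ) := by positivity
    linarith
  have heqsum : ∑ Gb ∈ (τ (σ b)).parts,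
      max ((vsum v b Gb : ℚ) - (V2 v (buyersOf σ (σ b)) Gb : ℚ)) 0
      = ∑ Gb ∈ (τ (σ b)).parts, (vsum v b Gb : ℚ) :=
    le_antisymm (Finset.sum_le_sum hle) hsum
  have heq := (Finset.sum_eq_sum_iff_of_le hle).mp heqsum Gb hGb
  -- heq : max (v - V2) 0 = v
  by_contra hV2
  have hV2pos : (0:ℚ) < (V2 v (buyersOf σ (σ b)) Gb : ℚ) := by
    exact_mod_cast Nat.pos_of_ne_zero hV2
  have hvpos : (0:ℚ) < (vsum v b Gb : ℚ) := by exact_mod_cast hpos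
  have : max ((vsum v b Gb : ℚ) - (V2 v (buyersOf σ (σ b)) Gb : ℚ)) 0 < (vsum v b Gb : ℚ) := by
    rcases max_cases ((vsum v b Gb : ℚ) - (V2 v (buyersOf σ (σ b)) Gb : ℚ)) 0 with ⟨h1,h2⟩|⟨h1,h2⟩ <;>
      rw [h1] <;> linarith
  rw [heq] at this
  exact lt_irrefl _ this

lemma card_le_sum_V1 {v : B → G → ℕ} (τ : S → Finpartition (univ : Finset G)) (σ : B → S)
    [Nonempty G]
    (hσ : IsNash v τ σ) (hB : Fintype.card S ≤ Fintype.card B)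
    (hdem : ∀ b : B, 1 ≤ vsum v b (univ : Finset G)) :
    Fintype.card S ≤ ∑ s : S, ∑ Gb ∈ (τ s).parts, V1 v (buyersOf σ s) Gb := by
  by_cases hfull : ∀ s : S, (buyersOf σ s).Nonempty
  · -- every seller nonempty: each contributes ≥ 1
    have key : ∀ s : S, 1 ≤ ∑ Gb ∈ (τ s).parts, V1 v (buyersOf σ s) Gb := by
      intro s
      obtain ⟨b, hb⟩ := hfull s
      calc 1 ≤ vsum v b univ := hdem b
        _ = ∑ Gb ∈ (τ s).parts, vsum v b Gb := (vsum_parts v (τ s) b).symm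
        _ ≤ ∑ Gb ∈ (τ s).parts, V1 v (buyersOf σ s) Gb :=
          Finset.sum_le_sum fun Gb _ => Finset.le_sup (f := fun b => vsum v b Gb) hb
    calc Fintype.card S = ∑ _s : S, 1 := by simp
      _ ≤ _ := Finset.sum_le_sum fun s _ => key s
  · push_neg at hfull
    obtain ⟨s0, hs0⟩ := hfull
    have hs0 : buyersOf σ s0 = ∅ := hs0
    have key : ∀ s : S, (buyersOf σ s).card ≤ ∑ Gb ∈ (τ s).parts, V1 v (buyersOf σ s) Gb := by
      intro s
      have hpart : ∀ Gb ∈ (τ s).parts,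
          ∑ b ∈ buyersOf σ s, vsum v b Gb ≤ V1 v (buyersOf σ s) Gb := by
        intro Gb hGb
        refine sum_vsum_le_V1 ?_
        rintro ⟨b', hb', hpos⟩
        have hσb' : σ b' = s := by
          have := Finset.mem_filter.mp hb'; exact this.2
        have := V2_zero_of_pos hσ hs0 b' (by rw [hσb']; exact hGb) hpos
        rwa [hσb'] at this
      calc (buyersOf σ s).card = ∑ b ∈ buyersOf σ s, 1 := by simp
        _ ≤ ∑ b ∈ buyersOf σ s, vsum v b univ := Finset.sum_le_sum fun b _ => hdem b
        _ = ∑ b ∈ buyersOf σ s, ∑ Gb ∈ (τ s).parts, vsum v b Gb := by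
          refine Finset.sum_congr rfl fun b _ => (vsum_parts v (τ s) b).symm
        _ = ∑ Gb ∈ (τ s).parts, ∑ b ∈ buyersOf σ s, vsum v b Gb := Finset.sum_comm
        _ ≤ ∑ Gb ∈ (τ s).parts, V1 v (buyersOf σ s) Gb := Finset.sum_le_sum hpart
    calc Fintype.card S ≤ Fintype.card B := hB
      _ = ∑ s : S, (buyersOf σ s).card := by
        rw [← Finset.card_univ]
        exact Finset.card_eq_sum_card_fiberwise (f := σ) (fun b _ => Finset.mem_univ (σ b))
      _ ≤ _ := Finset.sum_le_sum fun s _ => key s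

/-- with at least two sellers, at least as many buyers as
sellers, and positive demand for each buyer, every equilibrium has social
welfare at least `1/|G|`. -/
theorem nash_sw_ge_inv_G [Nonempty B] [Nonempty G] [Nonempty S]
    (v : B → G → ℕ) (hv : ∀ b g, v b g ≤ 1)
    (hS : 2 ≤ Fintype.card S) (hB : Fintype.card S ≤ Fintype.card B)
    (hdem : ∀ b : B, 1 ≤ vsum v b (univ : Finset G))
    (τ : S → Finpartition (univ : Finset G)) (σ : B → S) (hσ : IsNash v τ σ) :
    (Fintype.card G : ℚ)⁻¹ ≤ SWm v τ σ := by
  have hGpos : (0:ℚ) < (Fintype.card G : ℚ) := by exact_mod_cast Fintype.card_pos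
  have hSpos : (0:ℚ) < (Fintype.card S : ℚ) := by exact_mod_cast Fintype.card_pos
  have key : (Fintype.card S : ℚ) ≤
      ∑ s : S, ∑ Gb ∈ (τ s).parts, (V1 v (buyersOf σ s) Gb : ℚ) := by
    have := card_le_sum_V1 τ σ hσ hB hdem
    calc (Fintype.card S : ℚ)
        ≤ ((∑ s : S, ∑ Gb ∈ (τ s).parts, V1 v (buyersOf σ s) Gb : ℕ) : ℚ) := by
          exact_mod_cast this
      _ = _ := by push_cast; rfl
  unfold SWm
  have h1 : ((Fintype.card S : ℚ) * (Fintype.card G : ℚ))⁻¹ * (Fintype.card S : ℚ)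
      = (Fintype.card G : ℚ)⁻¹ := by field_simp
  calc (Fintype.card G : ℚ)⁻¹
      = ((Fintype.card S : ℚ) * (Fintype.card G : ℚ))⁻¹ * (Fintype.card S : ℚ) := h1.symm
    _ ≤ _ := mul_le_mul_of_nonneg_left key (by positivity)
end
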